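/- For n ≥ 1, the number of decreasing planar trees on vertex set [1,n] equals (2n−3)(2n−5)⋯3·1 = (2n−2)!/((n−1)!·2^{n−1}). -/

import Mathlib

/-- A decreasing planar tree on `[1,n]`: a rooted tree on the vertices
`1, …, n` in which every node is smaller than all of its ancestors (so the
root is `n`), together with a linear ordering of the children of each node.
It is encoded by the parent function `parent` (with `i < parent i`, which
forces the decreasing property) and by the rank `ord i` of each non-root node
`i` within the birth order of its sibling set.  Both functions are normalized
to `0` outside `[1, n-1]`, so that trees correspond bijectively to terms. -/
structure DPT (n : ℕ) : Type where
  parent : ℕ → ℕ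
  ord : ℕ → ℕ
  parent_mem : ∀ i, 1 ≤ i → i < n → i < parent i ∧ parent i ≤ n
  ord_lt : ∀ i, 1 ≤ i → i < n →
    ord i < Nat.card {j : ℕ // 1 ≤ j ∧ j < n ∧ parent j = parent i}
  ord_inj : ∀ i j, 1 ≤ i → i < n → 1 ≤ j → j < n →
    parent i = parent j → ord i = ord j → i = j
  parent_out : ∀ i, i = 0 ∨ n ≤ i → parent i = 0
  ord_out : ∀ i, i = 0 ∨ n ≤ i → ord i = 0


namespace DPTaux

lemma dpt_ext {n : ℕ} {s t : DPT n} (hp : s.parent = t.parent) (ho : s.ord = t.ord) :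
    s = t := by
  cases s; cases t; simp_all

/-- fiber of the parent map -/
def fib (n : ℕ) (f : ℕ → ℕ) (p : ℕ) : Finset ℕ :=
  (Finset.Ico 1 n).filter (fun j => f j = p)

lemma mem_fib {n f p j} : j ∈ fib n f p ↔ 1 ≤ j ∧ j < n ∧ f j = p := by
  simp [fib, Finset.mem_filter, Finset.mem_Ico, and_assoc]

lemma card_fib (n : ℕ) (f : ℕ → ℕ) (p : ℕ) :
    Nat.card {j : ℕ // 1 ≤ j ∧ j < n ∧ f j = p} = (fib n f p).card := by
  rw [← Nat.card_eq_finsetCard]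
  exact Nat.card_congr (Equiv.subtypeEquivRight (by simp [mem_fib]))

lemma ord_lt' {n : ℕ} (t : DPT n) (i : ℕ) (h1 : 1 ≤ i) (h2 : i < n) :
    t.ord i < (fib n t.parent (t.parent i)).card := by
  rw [← card_fib]; exact t.ord_lt i h1 h2

lemma fib_card_le (n : ℕ) (f : ℕ → ℕ) (p : ℕ) : (fib n f p).card ≤ n - 1 := by
  calc (fib n f p).card ≤ (Finset.Ico 1 n).card := Finset.card_le_card (Finset.filter_subset _ _)
  _ = n - 1 := by rw [Nat.card_Ico]

/-- sum of fiber sizes -/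
lemma sum_fib (n : ℕ) (t : DPT n) :
    ∑ p ∈ Finset.Icc 1 n, (fib n t.parent p).card = n - 1 := by
  rw [← Nat.card_Ico 1 n]
  exact (Finset.card_eq_sum_card_fiberwise (f := fun j => t.parent j)
    (fun j hj => by
      rw [Finset.mem_coe, Finset.mem_Ico] at hj
      have := t.parent_mem j hj.1 hj.2
      show t.parent j ∈ Finset.Icc 1 n
      rw [Finset.mem_Icc]; omega)).symm

lemma card_erase_ite (s : Finset ℕ) (a : ℕ) :
    s.card = (s.erase a).card + (if a ∈ s then 1 else 0) := by
  split
  · rw [Finset.card_erase_of_mem ‹_›]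
    have : 1 ≤ s.card := Finset.card_pos.2 ⟨a, ‹_›⟩
    omega
  · rw [Finset.erase_eq_of_notMem ‹_›]; simp

/-- the set of slots where a new minimal vertex can be attached -/
def Slot (n : ℕ) (t : DPT n) : Type :=
  {pk : ℕ × ℕ // 1 ≤ pk.1 ∧ pk.1 ≤ n ∧ pk.2 ≤ (fib n t.parent pk.1).card}

lemma card_slot (n : ℕ) (hn : 1 ≤ n) (t : DPT n) : Nat.card (Slot n t) = 2 * n - 1 := by
  have e : Slot n t ≃
      {x : (_ : ℕ) × ℕ // x ∈ (Finset.Icc 1 n).sigma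
        (fun p => Finset.Icc 0 ((fib n t.parent p).card))} :=
    { toFun := fun x => ⟨⟨x.1.1, x.1.2⟩, by
        have := x.2
        simp only [Finset.mem_sigma, Finset.mem_Icc]
        omega⟩
      invFun := fun x => ⟨(x.1.1, x.1.2), by
        have := x.2
        simp only [Finset.mem_sigma, Finset.mem_Icc] at this
        exact ⟨this.1.1, this.1.2, this.2.2⟩⟩
      left_inv := fun x => rfl
      right_inv := fun x => rfl }
  rw [Nat.card_congr e, Nat.card_eq_finsetCard, Finset.card_sigma]
  have : ∀ p ∈ Finset.Icc 1 n, (Finset.Icc 0 ((fib n t.parent p).card)).card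
      = (fib n t.parent p).card + 1 := by
    intro p _
    rw [Nat.card_Icc]; omega
  rw [Finset.sum_congr rfl this, Finset.sum_add_distrib, sum_fib, Finset.sum_const,
    Nat.card_Icc]
  simp only [smul_eq_mul, mul_one]
  omega

def triv : DPT 1 :=
  ⟨fun _ => 0, fun _ => 0, fun i h1 h2 => absurd h2 (by omega),
    fun i h1 h2 => absurd h2 (by omega), fun i j h1 h2 => absurd h2 (by omega),
    fun _ _ => rfl, fun _ _ => rfl⟩

instance : Unique (DPT 1) where
  default := triv
  uniq := fun T => by
    apply dpt_ext
    · funext i; exact T.parent_out i (by omega)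
    · funext i; exact T.ord_out i (by omega)

lemma card_dpt_one : Nat.card (DPT 1) = 1 := Nat.card_unique

instance dptFinite (n : ℕ) : Finite (DPT n) := by
  have hb : ∀ t : DPT n, ∀ i : ℕ, t.parent i < n + 1 ∧ t.ord i < n + 1 := by
    intro t i
    by_cases h : 1 ≤ i ∧ i < n
    · have h1 := t.parent_mem i h.1 h.2
      have h2 := ord_lt' t i h.1 h.2
      have h3 := fib_card_le n t.parent (t.parent i)
      omega
    · rw [t.parent_out i (by omega), t.ord_out i (by omega)]
      omega
  apply Finite.of_injective
    (fun t : DPT n => ((fun i : Fin n => (⟨t.parent i, (hb t i).1⟩ : Fin (n+1)),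
      fun i : Fin n => (⟨t.ord i, (hb t i).2⟩ : Fin (n+1))) :
      (Fin n → Fin (n+1)) × (Fin n → Fin (n+1))))
  intro s t h
  rw [Prod.mk.injEq] at h
  apply dpt_ext
  · funext i
    by_cases hi : i < n
    · exact congrArg Fin.val (congrFun h.1 ⟨i, hi⟩)
    · rw [s.parent_out i (by omega), t.parent_out i (by omega)]
  · funext i
    by_cases hi : i < n
    · exact congrArg Fin.val (congrFun h.2 ⟨i, hi⟩)
    · rw [s.ord_out i (by omega), t.ord_out i (by omega)]

/-! ### Removing vertex 1 -/

def dparent (n : ℕ) (T : DPT (n+1)) : ℕ → ℕ :=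
  fun j => if 1 ≤ j ∧ j < n then T.parent (j+1) - 1 else 0

def dord (n : ℕ) (T : DPT (n+1)) : ℕ → ℕ := fun j =>
  if 1 ≤ j ∧ j < n then
    (if T.parent (j+1) = T.parent 1 ∧ T.ord 1 < T.ord (j+1) then T.ord (j+1) - 1
     else T.ord (j+1))
  else 0

lemma card_fib_dparent (n : ℕ) (T : DPT (n+1)) (q : ℕ) (hq : 1 ≤ q) :
    (fib n (dparent n T) q).card = ((fib (n+1) T.parent (q+1)).erase 1).card := by
  refine Finset.card_bij' (fun j _ => j + 1) (fun j _ => j - 1) ?_ ?_ ?_ ?_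
  · intro a ha
    rw [mem_fib] at ha
    obtain ⟨h1, h2, h3⟩ := ha
    simp only [dparent] at h3
    rw [if_pos ⟨h1, h2⟩] at h3
    have hp := T.parent_mem (a+1) (by omega) (by omega)
    simp only [Finset.mem_erase, mem_fib]
    omega
  · intro a ha
    rw [Finset.mem_erase, mem_fib] at ha
    obtain ⟨hne, h1, h2, h3⟩ := ha
    have ha1 : a - 1 + 1 = a := by omega
    simp only [mem_fib, dparent]
    refine ⟨by omega, by omega, ?_⟩
    rw [if_pos (show 1 ≤ a - 1 ∧ a - 1 < n by omega), ha1]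
    omega
  · intro a _
    show a + 1 - 1 = a
    omega
  · intro a ha
    rw [Finset.mem_erase, mem_fib] at ha
    show a - 1 + 1 = a
    omega

def down (n : ℕ) (T : DPT (n+1)) : DPT n where
  parent := dparent n T
  ord := dord n T
  parent_mem := fun i h1 h2 => by
    have hp := T.parent_mem (i+1) (by omega) (by omega)
    simp only [dparent]
    rw [if_pos ⟨h1, h2⟩]
    omega
  ord_lt := fun i h1 h2 => by
    rw [card_fib]
    have hn2 : 1 < n + 1 := by omega
    have hp := T.parent_mem (i+1) (by omega) (by omega)
    have hO := ord_lt' T (i+1) (by omega) (by omega)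
    have hdp : dparent n T i = T.parent (i+1) - 1 := by
      simp only [dparent]; rw [if_pos ⟨h1, h2⟩]
    have hq1 : (T.parent (i+1) - 1) + 1 = T.parent (i+1) := by omega
    have hcard := card_fib_dparent n T (T.parent (i+1) - 1) (by omega)
    rw [hq1] at hcard
    rw [hdp, hcard]
    have herase := card_erase_ite (fib (n+1) T.parent (T.parent (i+1))) 1
    have hdo : dord n T i =
        if T.parent (i+1) = T.parent 1 ∧ T.ord 1 < T.ord (i+1) then T.ord (i+1) - 1
        else T.ord (i+1) := by
      simp only [dord]; rw [if_pos ⟨h1, h2⟩]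
    rw [hdo]
    by_cases hPp : T.parent (i+1) = T.parent 1
    · have h1mem : 1 ∈ fib (n+1) T.parent (T.parent (i+1)) :=
        mem_fib.2 ⟨le_refl 1, hn2, hPp.symm⟩
      rw [if_pos h1mem] at herase
      have ho1 : T.ord 1 < (fib (n+1) T.parent (T.parent (i+1))).card := by
        have h := ord_lt' T 1 le_rfl hn2
        rwa [← hPp] at h
      have hne : T.ord (i+1) ≠ T.ord 1 := fun he => by
        have := T.ord_inj (i+1) 1 (by omega) (by omega) le_rfl hn2 hPp he; omega
      by_cases ho : T.ord 1 < T.ord (i+1)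
      · rw [if_pos ⟨hPp, ho⟩]; omega
      · rw [if_neg (by tauto)]; omega
    · have h1mem : 1 ∉ fib (n+1) T.parent (T.parent (i+1)) := fun hm =>
        hPp ((mem_fib.1 hm).2.2).symm
      rw [if_neg h1mem] at herase
      rw [if_neg (by tauto)]
      omega
  ord_inj := fun i j hi1 hi2 hj1 hj2 hpar hord => by
    simp only [dparent] at hpar
    rw [if_pos ⟨hi1, hi2⟩, if_pos ⟨hj1, hj2⟩] at hpar
    have hpi := T.parent_mem (i+1) (by omega) (by omega)
    have hpj := T.parent_mem (j+1) (by omega) (by omega)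
    have hP : T.parent (i+1) = T.parent (j+1) := by omega
    simp only [dord] at hord
    rw [if_pos (show 1 ≤ i ∧ i < n from ⟨hi1, hi2⟩),
      if_pos (show 1 ≤ j ∧ j < n from ⟨hj1, hj2⟩)] at hord
    have hn2 : 1 < n + 1 := by omega
    have key : T.ord (i+1) = T.ord (j+1) := by
      by_cases hPp : T.parent (i+1) = T.parent 1
      · have hnei : T.ord (i+1) ≠ T.ord 1 := fun he => by
          have := T.ord_inj (i+1) 1 (by omega) (by omega) le_rfl hn2 hPp he; omega
        have hnej : T.ord (j+1) ≠ T.ord 1 := fun he => by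
          have := T.ord_inj (j+1) 1 (by omega) (by omega) le_rfl hn2 (hP ▸ hPp) he; omega
        split_ifs at hord <;> omega
      · split_ifs at hord <;> omega
    have := T.ord_inj (i+1) (j+1) (by omega) (by omega) (by omega) (by omega) hP key
    omega
  parent_out := fun i hi => by
    simp only [dparent]; rw [if_neg (by omega)]
  ord_out := fun i hi => by
    simp only [dord]; rw [if_neg (by omega)]

/-! ### Adding vertex 1 -/

def uparent (n : ℕ) (t : DPT n) (p : ℕ) : ℕ → ℕ :=
  fun i => if i = 1 then p + 1 else if 2 ≤ i ∧ i < n + 1 then t.parent (i-1) + 1 else 0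

def uord (n : ℕ) (t : DPT n) (p k : ℕ) : ℕ → ℕ := fun i =>
  if i = 1 then k
  else if 2 ≤ i ∧ i < n + 1 then
    (if t.parent (i-1) = p ∧ k ≤ t.ord (i-1) then t.ord (i-1) + 1 else t.ord (i-1))
  else 0

lemma card_fib_uparent_erase (n : ℕ) (t : DPT n) (p q : ℕ) (hq : 2 ≤ q) :
    ((fib (n+1) (uparent n t p) q).erase 1).card = (fib n t.parent (q-1)).card := by
  refine Finset.card_bij' (fun j _ => j - 1) (fun j _ => j + 1) ?_ ?_ ?_ ?_
  · intro a ha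
    rw [Finset.mem_erase, mem_fib] at ha
    obtain ⟨hne, h1, h2, h3⟩ := ha
    simp only [uparent] at h3
    rw [if_neg hne] at h3
    simp only [mem_fib]
    by_cases hr : 2 ≤ a ∧ a < n + 1
    · rw [if_pos hr] at h3; omega
    · rw [if_neg hr] at h3; omega
  · intro a ha
    rw [mem_fib] at ha
    obtain ⟨h1, h2, h3⟩ := ha
    simp only [Finset.mem_erase, mem_fib, uparent]
    refine ⟨by omega, by omega, by omega, ?_⟩
    rw [if_neg (by omega), if_pos (show 2 ≤ a + 1 ∧ a + 1 < n + 1 by omega)]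
    have ha1 : a + 1 - 1 = a := by omega
    rw [ha1]
    omega
  · intro a ha
    rw [Finset.mem_erase, mem_fib] at ha
    show a - 1 + 1 = a
    omega
  · intro a _
    show a + 1 - 1 = a
    omega

lemma one_mem_fib_uparent (n : ℕ) (hn : 1 ≤ n) (t : DPT n) (p q : ℕ) :
    1 ∈ fib (n+1) (uparent n t p) q ↔ q = p + 1 := by
  rw [mem_fib]
  simp only [uparent, if_pos rfl, eq_self_iff_true, if_true]
  omega

lemma card_fib_uparent (n : ℕ) (hn : 1 ≤ n) (t : DPT n) (p q : ℕ) (hq : 2 ≤ q) :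
    (fib (n+1) (uparent n t p) q).card =
      (fib n t.parent (q-1)).card + (if q = p + 1 then 1 else 0) := by
  rw [card_erase_ite (fib (n+1) (uparent n t p) q) 1,
    card_fib_uparent_erase n t p q hq]
  congr 1
  simp only [one_mem_fib_uparent n hn t p q]

def up (n : ℕ) (hn : 1 ≤ n) (t : DPT n) (p k : ℕ) (hp1 : 1 ≤ p) (hpn : p ≤ n)
    (hk : k ≤ (fib n t.parent p).card) : DPT (n+1) where
  parent := uparent n t p
  ord := uord n t p k
  parent_mem := fun i h1 h2 => by
    simp only [uparent]
    by_cases hi : i = 1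
    · rw [if_pos hi]; omega
    · rw [if_neg hi, if_pos (show 2 ≤ i ∧ i < n + 1 by omega)]
      have := t.parent_mem (i-1) (by omega) (by omega)
      omega
  ord_lt := fun i h1 h2 => by
    rw [card_fib]
    by_cases hi : i = 1
    · subst hi
      have hup : uparent n t p 1 = p + 1 := by simp [uparent]
      rw [hup, card_fib_uparent n hn t p (p+1) (by omega)]
      have huo : uord n t p k 1 = k := by simp [uord]
      rw [huo, if_pos rfl]
      have hpq : p + 1 - 1 = p := by omega
      rw [hpq]
      omega
    · have hr : 2 ≤ i ∧ i < n + 1 := by omega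
      have hup : uparent n t p i = t.parent (i-1) + 1 := by
        simp only [uparent]; rw [if_neg hi, if_pos hr]
      have hpm := t.parent_mem (i-1) (by omega) (by omega)
      rw [hup, card_fib_uparent n hn t p (t.parent (i-1) + 1) (by omega)]
      have hq1 : t.parent (i-1) + 1 - 1 = t.parent (i-1) := by omega
      rw [hq1]
      have hO := ord_lt' t (i-1) (by omega) (by omega)
      have huo : uord n t p k i =
          if t.parent (i-1) = p ∧ k ≤ t.ord (i-1) then t.ord (i-1) + 1
          else t.ord (i-1) := by
        simp only [uord]; rw [if_neg hi, if_pos hr]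
      rw [huo]
      by_cases hc : t.parent (i-1) = p ∧ k ≤ t.ord (i-1)
      · rw [if_pos hc, if_pos (by omega)]
        omega
      · rw [if_neg hc]
        split_ifs <;> omega
  ord_inj := fun i j hi1 hi2 hj1 hj2 hpar hord => by
    by_cases hi : i = 1 <;> by_cases hj : j = 1
    · omega
    · exfalso
      subst hi
      have hrj : 2 ≤ j ∧ j < n + 1 := by omega
      simp only [uparent, if_pos rfl, eq_self_iff_true, if_true, if_neg hj] at hpar
      rw [if_pos hrj] at hpar
      have hPj : t.parent (j-1) = p := by omega
      simp only [uord, if_pos rfl, eq_self_iff_true, if_true, if_neg hj] at hord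
      rw [if_pos hrj] at hord
      have hOj := ord_lt' t (j-1) (by omega) (by omega)
      rw [hPj] at hOj
      split_ifs at hord <;> omega
    · exfalso
      subst hj
      have hri : 2 ≤ i ∧ i < n + 1 := by omega
      simp only [uparent, if_pos rfl, eq_self_iff_true, if_true, if_neg hi] at hpar
      rw [if_pos hri] at hpar
      have hPi : t.parent (i-1) = p := by omega
      simp only [uord, if_pos rfl, eq_self_iff_true, if_true, if_neg hi] at hord
      rw [if_pos hri] at hord
      have hOi := ord_lt' t (i-1) (by omega) (by omega)
      rw [hPi] at hOi
      split_ifs at hord <;> omega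
    · have hri : 2 ≤ i ∧ i < n + 1 := by omega
      have hrj : 2 ≤ j ∧ j < n + 1 := by omega
      simp only [uparent, if_neg hi, if_neg hj] at hpar
      rw [if_pos hri, if_pos hrj] at hpar
      have hP : t.parent (i-1) = t.parent (j-1) := by omega
      simp only [uord, if_neg hi, if_neg hj] at hord
      rw [if_pos hri, if_pos hrj] at hord
      have key : t.ord (i-1) = t.ord (j-1) := by
        split_ifs at hord <;> omega
      have := t.ord_inj (i-1) (j-1) (by omega) (by omega) (by omega) (by omega) hP key
      omega
  parent_out := fun i hi => by
    simp only [uparent]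
    rw [if_neg (by omega), if_neg (by omega)]
  ord_out := fun i hi => by
    simp only [uord]
    rw [if_neg (by omega), if_neg (by omega)]

lemma sigma_slot_ext {n : ℕ} {t t' : DPT n} {a : Slot n t} {b : Slot n t'}
    (h : t = t') (hv : a.1 = b.1) : (⟨t, a⟩ : Σ s, Slot n s) = ⟨t', b⟩ := by
  subst h
  exact congrArg _ (Subtype.ext hv)

def upDownEquiv (n : ℕ) (hn : 1 ≤ n) : DPT (n+1) ≃ Σ t : DPT n, Slot n t where
  toFun T := ⟨down n T, ⟨(T.parent 1 - 1, T.ord 1), by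
    have hp := T.parent_mem 1 le_rfl (by omega)
    have hO := ord_lt' T 1 le_rfl (by omega)
    have hq1 : (T.parent 1 - 1) + 1 = T.parent 1 := by omega
    have hcard := card_fib_dparent n T (T.parent 1 - 1) (by omega)
    rw [hq1] at hcard
    have h1mem : 1 ∈ fib (n+1) T.parent (T.parent 1) := mem_fib.2 ⟨le_rfl, by omega, rfl⟩
    have herase := card_erase_ite (fib (n+1) T.parent (T.parent 1)) 1
    rw [if_pos h1mem] at herase
    have hdp : (down n T).parent = dparent n T := rfl
    rw [hdp]
    refine ⟨by omega, by omega, by rw [hcard]; omega⟩⟩⟩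
  invFun x := up n hn x.1 x.2.1.1 x.2.1.2 x.2.2.1 x.2.2.2.1 x.2.2.2.2
  left_inv := fun T => by
    apply dpt_ext
    · funext i
      show uparent n (down n T) (T.parent 1 - 1) i = T.parent i
      have hp1 := T.parent_mem 1 le_rfl (by omega)
      simp only [uparent]
      by_cases hi : i = 1
      · rw [if_pos hi, hi]
        omega
      · rw [if_neg hi]
        by_cases hr : 2 ≤ i ∧ i < n + 1
        · rw [if_pos hr]
          have hpi := T.parent_mem i (by omega) (by omega)
          have hdp : (down n T).parent (i - 1) = T.parent (i - 1 + 1) - 1 := by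
            show dparent n T (i-1) = _
            simp only [dparent]
            rw [if_pos (show 1 ≤ i - 1 ∧ i - 1 < n by omega)]
          have hi1 : i - 1 + 1 = i := by omega
          rw [hdp, hi1]
          omega
        · rw [if_neg hr, T.parent_out i (by omega)]
    · funext i
      show uord n (down n T) (T.parent 1 - 1) (T.ord 1) i = T.ord i
      simp only [uord]
      by_cases hi : i = 1
      · rw [if_pos hi, hi]
      · rw [if_neg hi]
        by_cases hr : 2 ≤ i ∧ i < n + 1
        · rw [if_pos hr]
          have hpi := T.parent_mem i (by omega) (by omega)
          have hp1 := T.parent_mem 1 le_rfl (by omega)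
          have hi1 : i - 1 + 1 = i := by omega
          have hdp : (down n T).parent (i - 1) = T.parent i - 1 := by
            show dparent n T (i-1) = _
            simp only [dparent]
            rw [if_pos (show 1 ≤ i - 1 ∧ i - 1 < n by omega), hi1]
          have hdo : (down n T).ord (i - 1) =
              if T.parent i = T.parent 1 ∧ T.ord 1 < T.ord i then T.ord i - 1
              else T.ord i := by
            show dord n T (i-1) = _
            simp only [dord]
            rw [if_pos (show 1 ≤ i - 1 ∧ i - 1 < n by omega), hi1]
          rw [hdp, hdo]
          by_cases hA : T.parent i = T.parent 1
          · have hne : T.ord i ≠ T.ord 1 := fun he => by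
              have := T.ord_inj i 1 (by omega) (by omega) le_rfl (by omega) hA he
              omega
            by_cases ho : T.ord 1 < T.ord i
            · rw [if_pos (show T.parent i = T.parent 1 ∧ T.ord 1 < T.ord i from ⟨hA, ho⟩),
                if_pos (show T.parent i - 1 = T.parent 1 - 1 ∧
                  T.ord 1 ≤ T.ord i - 1 by omega)]
              omega
            · rw [if_neg (show ¬(T.parent i = T.parent 1 ∧ T.ord 1 < T.ord i) by tauto),
                if_neg (show ¬(T.parent i - 1 = T.parent 1 - 1 ∧ T.ord 1 ≤ T.ord i) by omega)]
          · rw [if_neg (show ¬(T.parent i = T.parent 1 ∧ T.ord 1 < T.ord i) by tauto),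
              if_neg (show ¬(T.parent i - 1 = T.parent 1 - 1 ∧ T.ord 1 ≤ T.ord i) by omega)]
        · rw [if_neg hr, T.ord_out i (by omega)]
  right_inv := fun x => by
    obtain ⟨t, ⟨⟨p, k⟩, hp1, hpn, hk⟩⟩ := x
    set U := up n hn t p k hp1 hpn hk with hU
    have hUp : U.parent = uparent n t p := rfl
    have hUo : U.ord = uord n t p k := rfl
    have hP1 : U.parent 1 = p + 1 := by
      rw [hUp]; simp [uparent]
    have hO1 : U.ord 1 = k := by
      rw [hUo]; simp [uord]
    have h1 : down n U = t := by
      apply dpt_ext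
      · funext j
        show dparent n U j = t.parent j
        simp only [dparent]
        by_cases hr : 1 ≤ j ∧ j < n
        · rw [if_pos hr, hUp]
          simp only [uparent]
          rw [if_neg (by omega), if_pos (show 2 ≤ j + 1 ∧ j + 1 < n + 1 by omega)]
          have hj1 : j + 1 - 1 = j := by omega
          rw [hj1]
          omega
        · rw [if_neg hr, t.parent_out j (by omega)]
      · funext j
        show dord n U j = t.ord j
        simp only [dord]
        by_cases hr : 1 ≤ j ∧ j < n
        · rw [if_pos hr, hP1, hO1]
          have hj1 : j + 1 - 1 = j := by omega
          have hUpj : U.parent (j+1) = t.parent j + 1 := by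
            rw [hUp]; simp only [uparent]
            rw [if_neg (by omega), if_pos (show 2 ≤ j + 1 ∧ j + 1 < n + 1 by omega), hj1]
          have hUoj : U.ord (j+1) =
              if t.parent j = p ∧ k ≤ t.ord j then t.ord j + 1 else t.ord j := by
            rw [hUo]; simp only [uord]
            rw [if_neg (by omega), if_pos (show 2 ≤ j + 1 ∧ j + 1 < n + 1 by omega), hj1]
          rw [hUpj, hUoj]
          by_cases hA : t.parent j = p
          · by_cases ho : k ≤ t.ord j
            · rw [if_pos (show t.parent j = p ∧ k ≤ t.ord j from ⟨hA, ho⟩),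
                if_pos (show t.parent j + 1 = p + 1 ∧ k < t.ord j + 1 by omega)]
              omega
            · rw [if_neg (show ¬(t.parent j = p ∧ k ≤ t.ord j) by tauto),
                if_neg (show ¬(t.parent j + 1 = p + 1 ∧ k < t.ord j) by omega)]
          · rw [if_neg (show ¬(t.parent j = p ∧ k ≤ t.ord j) by tauto),
              if_neg (show ¬(t.parent j + 1 = p + 1 ∧ k < t.ord j) by omega)]
        · rw [if_neg hr, t.ord_out j (by omega)]
    refine sigma_slot_ext h1 ?_
    show (U.parent 1 - 1, U.ord 1) = (p, k)
    rw [hP1, hO1]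
    simp

lemma slotFinite (n : ℕ) (hn : 1 ≤ n) (t : DPT n) : Finite (Slot n t) :=
  Nat.finite_of_card_ne_zero (by rw [card_slot n hn t]; omega)

lemma card_succ (n : ℕ) (hn : 1 ≤ n) :
    Nat.card (DPT (n+1)) = (2 * n - 1) * Nat.card (DPT n) := by
  classical
  letI : Fintype (DPT n) := Fintype.ofFinite _
  letI : ∀ t : DPT n, Fintype (Slot n t) := fun t => @Fintype.ofFinite _ (slotFinite n hn t)
  calc Nat.card (DPT (n+1)) = Nat.card (Σ t : DPT n, Slot n t) :=
        Nat.card_congr (upDownEquiv n hn)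
    _ = Fintype.card (Σ t : DPT n, Slot n t) := Nat.card_eq_fintype_card
    _ = ∑ t : DPT n, Fintype.card (Slot n t) := Fintype.card_sigma
    _ = ∑ _t : DPT n, (2 * n - 1) := Finset.sum_congr rfl (fun t _ => by
        rw [← Nat.card_eq_fintype_card, card_slot n hn t])
    _ = Fintype.card (DPT n) * (2 * n - 1) := by
        rw [Finset.sum_const, Finset.card_univ, smul_eq_mul]
    _ = (2 * n - 1) * Nat.card (DPT n) := by
        rw [Nat.card_eq_fintype_card]; ring

lemma card_dpt (n : ℕ) (hn : 1 ≤ n) :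
    Nat.card (DPT n) = Nat.doubleFactorial (2 * n - 3) := by
  induction n, hn using Nat.le_induction with
  | base => rw [card_dpt_one]; rfl
  | succ n hn ih =>
    rw [card_succ n hn, ih]
    have h : Nat.doubleFactorial (2 * (n+1) - 3) = (2 * n - 1) * Nat.doubleFactorial (2 * n - 3) := by
      rcases Nat.lt_or_ge n 2 with h2 | h2
      · interval_cases n
        · decide
      · have e1 : 2 * (n+1) - 3 = (2 * n - 3) + 2 := by omega
        rw [e1, Nat.doubleFactorial_add_two]
        congr 1
        omega
    rw [h]

lemma factorial_eq (k : ℕ) :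
    Nat.factorial (2 * k) = (Nat.factorial k * 2 ^ k) * Nat.doubleFactorial (2 * k - 1) := by
  cases k with
  | zero => decide
  | succ m =>
    have e1 : 2 * (m + 1) = (2 * m + 1) + 1 := by ring
    have e2 : 2 * (m + 1) - 1 = 2 * m + 1 := by omega
    rw [e2, e1, Nat.factorial_eq_mul_doubleFactorial (2 * m + 1)]
    have e3 : 2 * m + 1 + 1 = 2 * (m + 1) := by ring
    rw [e3, Nat.doubleFactorial_two_mul]
    ring

end DPTaux

theorem stmt9 (n : ℕ) (hn : 1 ≤ n) :
    Nat.card (DPT n) =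
      Nat.factorial (2 * n - 2) / (Nat.factorial (n - 1) * 2 ^ (n - 1)) ∧
    Nat.card (DPT n) = Nat.doubleFactorial (2 * n - 3) := by
  have h2 := DPTaux.card_dpt n hn
  refine ⟨?_, h2⟩
  obtain ⟨k, rfl⟩ : ∃ k, n = k + 1 := ⟨n - 1, by omega⟩
  have e1 : 2 * (k + 1) - 2 = 2 * k := by omega
  have e2 : k + 1 - 1 = k := by omega
  have e3 : 2 * (k + 1) - 3 = 2 * k - 1 := by omega
  rw [e1, e2, DPTaux.factorial_eq k, h2, e3,
    Nat.mul_div_cancel_left _ (by positivity)]
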